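/- arXiv:2505.07031 — 2 statements merged into one kernel-verified Lean document; each statement's English description precedes it below -/
import Mathlib

section
/- Let 1 ≤ p ≤ q < ∞ and α ∈ [p/q, 1], and let f : E → E be Hölder continuous on bounded sets with exponent α. Then the composition operator C_f maps ℓ^p(E) into bv_q(E) and for every r > 0 there is a constant Γ_r (one may take Γ_r = 5·L_r where L_r is the Hölder constant of f on the closed ball of radius r) such that ‖C_f(x)−C_f(y)‖_{bv_q} ≤ Γ_r·‖x−y‖_{ℓ^p}^α for all x, y in the closed ball of radius r in ℓ^p(E). -/
noncomputable def bvNorm {E : Type*} [NormedAddCommGroup E] (q : ℝ) (x : ℕ → E) : ℝ :=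
  ‖x 0‖ + (∑' n : ℕ, ‖x (n + 1) - x n‖ ^ q) ^ (1 / q)

noncomputable def lpNorm {E : Type*} [NormedAddCommGroup E] (p : ℝ) (x : ℕ → E) : ℝ :=
  (∑' n : ℕ, ‖x n‖ ^ p) ^ (1 / p)

/-- Auxiliary: if `∑ d n ^ p < ∞` and `p ≤ s`, then `∑ d n ^ s` is summable and bounded
by `((∑ d n ^ p) ^ (1/p)) ^ s`. -/
lemma aux_embed (p s : ℝ) (hp : 0 < p) (hps : p ≤ s) (d : ℕ → ℝ) (hd : ∀ n, 0 ≤ d n)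
    (hsum : Summable fun n => d n ^ p) :
    Summable (fun n => d n ^ s) ∧
      ∑' n, d n ^ s ≤ ((∑' n, d n ^ p) ^ (1 / p)) ^ s := by
  have hs : 0 < s := lt_of_lt_of_le hp hps
  set A := ∑' n, d n ^ p with hA
  have hA0 : 0 ≤ A := tsum_nonneg fun n => Real.rpow_nonneg (hd n) p
  set B := A ^ (1 / p) with hB
  have hB0 : 0 ≤ B := Real.rpow_nonneg hA0 _
  have hdB : ∀ n, d n ≤ B := by
    intro n
    have h1 : d n ^ p ≤ A := Summable.le_tsum hsum n fun m _ => Real.rpow_nonneg (hd m) p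
    have h2 : (d n ^ p) ^ (1 / p) ≤ B :=
      Real.rpow_le_rpow (Real.rpow_nonneg (hd n) p) h1 (by positivity)
    rwa [one_div, Real.rpow_rpow_inv (hd n) hp.ne'] at h2
  have key : ∀ n, d n ^ s ≤ d n ^ p * B ^ (s - p) := by
    intro n
    rcases eq_or_lt_of_le (hd n) with h0 | h0
    · rw [← h0, Real.zero_rpow hs.ne', Real.zero_rpow hp.ne', zero_mul]
    · have : d n ^ s = d n ^ p * d n ^ (s - p) := by
        rw [← Real.rpow_add h0]; ring_nf
      rw [this]
      exact mul_le_mul_of_nonneg_left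
        (Real.rpow_le_rpow (hd n) (hdB n) (by linarith)) (Real.rpow_nonneg (hd n) p)
  have hsum2 : Summable fun n => d n ^ p * B ^ (s - p) := hsum.mul_right _
  have hsumS : Summable fun n => d n ^ s :=
    Summable.of_nonneg_of_le (fun n => Real.rpow_nonneg (hd n) s) key hsum2
  refine ⟨hsumS, ?_⟩
  have h1 : ∑' n, d n ^ s ≤ ∑' n, d n ^ p * B ^ (s - p) := Summable.tsum_le_tsum key hsumS hsum2
  have h2 : ∑' n, d n ^ p * B ^ (s - p) = A * B ^ (s - p) := tsum_mul_right
  have hBA : B ^ p = A := by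
    rw [hB, one_div, Real.rpow_inv_rpow hA0 hp.ne']
  have h3 : A * B ^ (s - p) = B ^ s := by
    rw [← hBA, ← Real.rpow_add_of_nonneg hB0 hp.le (by linarith)]
    ring_nf
  calc ∑' n, d n ^ s ≤ A * B ^ (s - p) := h1.trans_eq h2
    _ = B ^ s := h3

/-- Each term is bounded by the `ℓ^p` norm. -/
lemma aux_le_lpNorm {E : Type*} [NormedAddCommGroup E] (p : ℝ) (hp : 0 < p)
    (x : ℕ → E) (hx : Summable fun n => ‖x n‖ ^ p) (n : ℕ) : ‖x n‖ ≤ lpNorm p x := by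
  have h1 : ‖x n‖ ^ p ≤ ∑' m, ‖x m‖ ^ p :=
    Summable.le_tsum hx n fun m _ => Real.rpow_nonneg (norm_nonneg _) p
  have h2 : (‖x n‖ ^ p) ^ (1 / p) ≤ lpNorm p x :=
    Real.rpow_le_rpow (Real.rpow_nonneg (norm_nonneg _) p) h1 (by positivity)
  rwa [one_div, Real.rpow_rpow_inv (norm_nonneg _) hp.ne'] at h2

set_option maxHeartbeats 1000000 in
theorem stmt15 {E : Type*} [NormedAddCommGroup E]
    (p q α : ℝ) (hp : 1 ≤ p) (hpq : p ≤ q) (hα : p / q ≤ α) (hα1 : α ≤ 1)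
    (f : E → E)
    (hf : ∀ r > (0 : ℝ), ∃ L ≥ (0 : ℝ), ∀ u w : E, ‖u‖ ≤ r → ‖w‖ ≤ r →
      ‖f u - f w‖ ≤ L * ‖u - w‖ ^ α) :
    (∀ x : ℕ → E, (Summable fun n : ℕ => ‖x n‖ ^ p) →
      Summable fun n : ℕ => ‖f (x (n + 1)) - f (x n)‖ ^ q) ∧
    ∀ r > (0 : ℝ), ∀ L ≥ (0 : ℝ),
      (∀ u w : E, ‖u‖ ≤ r → ‖w‖ ≤ r → ‖f u - f w‖ ≤ L * ‖u - w‖ ^ α) →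
      ∀ x y : ℕ → E, (Summable fun n : ℕ => ‖x n‖ ^ p) →
        (Summable fun n : ℕ => ‖y n‖ ^ p) →
        lpNorm p x ≤ r → lpNorm p y ≤ r →
        bvNorm q (fun n => f (x n) - f (y n)) ≤ 5 * L * lpNorm p (fun n => x n - y n) ^ α := by
  have hp0 : (0 : ℝ) < p := lt_of_lt_of_le one_pos hp
  have hq0 : (0 : ℝ) < q := lt_of_lt_of_le hp0 hpq
  have hα0 : 0 < α := lt_of_lt_of_le (div_pos hp0 hq0) hα
  have hpαq : p ≤ α * q := by
    have := (div_le_iff₀ hq0).mp hα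
    linarith
  have hαq0 : 0 < α * q := mul_pos hα0 hq0
  -- summability of the p-powers of differences
  have diffsum : ∀ x y : ℕ → E, (Summable fun n : ℕ => ‖x n‖ ^ p) →
      (Summable fun n : ℕ => ‖y n‖ ^ p) →
      Summable fun n : ℕ => ‖x n - y n‖ ^ p := by
    intro x y hx hy
    refine Summable.of_nonneg_of_le (fun n => Real.rpow_nonneg (norm_nonneg _) p)
      (fun n => ?_) (((hx.add hy).mul_left ((2 : ℝ) ^ p)))
    have h1 : ‖x n - y n‖ ≤ 2 * max ‖x n‖ ‖y n‖ := by
      have := norm_sub_le (x n) (y n)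
      have h2 : ‖x n‖ ≤ max ‖x n‖ ‖y n‖ := le_max_left _ _
      have h3 : ‖y n‖ ≤ max ‖x n‖ ‖y n‖ := le_max_right _ _
      linarith
    have h4 : ‖x n - y n‖ ^ p ≤ (2 * max ‖x n‖ ‖y n‖) ^ p :=
      Real.rpow_le_rpow (norm_nonneg _) h1 hp0.le
    have h5 : (2 * max ‖x n‖ ‖y n‖) ^ p = 2 ^ p * (max ‖x n‖ ‖y n‖) ^ p :=
      Real.mul_rpow (by norm_num) (le_max_of_le_left (norm_nonneg _))
    have h6 : (max ‖x n‖ ‖y n‖) ^ p ≤ ‖x n‖ ^ p + ‖y n‖ ^ p := by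
      rcases max_cases ‖x n‖ ‖y n‖ with ⟨he, _⟩ | ⟨he, _⟩ <;> rw [he]
      · exact le_add_of_nonneg_right (Real.rpow_nonneg (norm_nonneg (y n)) p)
      · exact le_add_of_nonneg_left (Real.rpow_nonneg (norm_nonneg (x n)) p)
    calc ‖x n - y n‖ ^ p ≤ 2 ^ p * (max ‖x n‖ ‖y n‖) ^ p := h4.trans_eq h5
      _ ≤ 2 ^ p * (‖x n‖ ^ p + ‖y n‖ ^ p) :=
        mul_le_mul_of_nonneg_left h6 (Real.rpow_nonneg (by norm_num) p)
  constructor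
  · -- Part 1
    intro x hx
    have hxsh : Summable fun n : ℕ => ‖x (n + 1)‖ ^ p :=
      (summable_nat_add_iff 1).mpr hx
    have hd : Summable fun n : ℕ => ‖x (n + 1) - x n‖ ^ p :=
      diffsum (fun n => x (n + 1)) x hxsh hx
    obtain ⟨hdαq, -⟩ := aux_embed p (α * q) hp0 hpαq _ (fun n => norm_nonneg _) hd
    set r : ℝ := lpNorm p x + 1 with hr
    have hlp0 : 0 ≤ lpNorm p x := Real.rpow_nonneg
      (tsum_nonneg fun n => Real.rpow_nonneg (norm_nonneg _) p) _
    obtain ⟨L, hL0, hL⟩ := hf r (by positivity)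
    have hxr : ∀ n, ‖x n‖ ≤ r := fun n =>
      (aux_le_lpNorm p hp0 x hx n).trans (by simp [hr])
    refine Summable.of_nonneg_of_le (fun n => Real.rpow_nonneg (norm_nonneg _) q)
      (fun n => ?_) ((hdαq.mul_left (L ^ q)))
    have h1 : ‖f (x (n + 1)) - f (x n)‖ ≤ L * ‖x (n + 1) - x n‖ ^ α :=
      hL _ _ (hxr _) (hxr _)
    have h2 : ‖f (x (n + 1)) - f (x n)‖ ^ q ≤ (L * ‖x (n + 1) - x n‖ ^ α) ^ q :=
      Real.rpow_le_rpow (norm_nonneg _) h1 hq0.le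
    have h3 : (L * ‖x (n + 1) - x n‖ ^ α) ^ q = L ^ q * ‖x (n + 1) - x n‖ ^ (α * q) := by
      rw [Real.mul_rpow hL0 (Real.rpow_nonneg (norm_nonneg _) _),
        ← Real.rpow_mul (norm_nonneg _)]
    rw [h3] at h2
    exact h2
  · -- Part 2
    intro r hr L hL0 hL x y hx hy hxr hyr
    set d : ℕ → ℝ := fun n => ‖x n - y n‖ with hdd
    have hd0 : ∀ n, 0 ≤ d n := fun n => norm_nonneg _
    have hdsum : Summable fun n => d n ^ p := diffsum x y hx hy
    obtain ⟨hdαq, hT⟩ := aux_embed p (α * q) hp0 hpαq d hd0 hdsum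
    set S : ℝ := lpNorm p (fun n => x n - y n) with hS
    have hS0 : 0 ≤ S := Real.rpow_nonneg
      (tsum_nonneg fun n => Real.rpow_nonneg (norm_nonneg _) p) _
    have hTS : ∑' n, d n ^ (α * q) ≤ S ^ (α * q) := hT
    have hdS : ∀ n, d n ≤ S := fun n => aux_le_lpNorm p hp0 _ hdsum n
    have hxr' : ∀ n, ‖x n‖ ≤ r := fun n => (aux_le_lpNorm p hp0 x hx n).trans hxr
    have hyr' : ∀ n, ‖y n‖ ≤ r := fun n => (aux_le_lpNorm p hp0 y hy n).trans hyr
    have hfd : ∀ n, ‖f (x n) - f (y n)‖ ≤ L * d n ^ α := fun n =>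
      hL _ _ (hxr' n) (hyr' n)
    -- the first term
    have hterm0 : ‖f (x 0) - f (y 0)‖ ≤ L * S ^ α :=
      (hfd 0).trans (mul_le_mul_of_nonneg_left
        (Real.rpow_le_rpow (hd0 0) (hdS 0) hα0.le) hL0)
    -- bound each difference term
    set z : ℕ → E := fun n => f (x n) - f (y n) with hz
    have hzn : ∀ n, ‖z (n + 1) - z n‖ ≤ L * d (n + 1) ^ α + L * d n ^ α := by
      intro n
      calc ‖z (n + 1) - z n‖ ≤ ‖z (n + 1)‖ + ‖z n‖ := norm_sub_le _ _
        _ ≤ L * d (n + 1) ^ α + L * d n ^ α := add_le_add (hfd _) (hfd _)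
    -- q-th powers
    have hzq : ∀ n, ‖z (n + 1) - z n‖ ^ q ≤
        2 ^ q * (L ^ q * d (n + 1) ^ (α * q) + L ^ q * d n ^ (α * q)) := by
      intro n
      set a := L * d (n + 1) ^ α
      set b := L * d n ^ α
      have ha0 : 0 ≤ a := mul_nonneg hL0 (Real.rpow_nonneg (hd0 _) _)
      have hb0 : 0 ≤ b := mul_nonneg hL0 (Real.rpow_nonneg (hd0 _) _)
      have h1 : ‖z (n + 1) - z n‖ ^ q ≤ (a + b) ^ q :=
        Real.rpow_le_rpow (norm_nonneg _) (hzn n) hq0.le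
      have h2 : a + b ≤ 2 * max a b := by
        have := le_max_left a b; have := le_max_right a b; linarith
      have h3 : (a + b) ^ q ≤ (2 * max a b) ^ q :=
        Real.rpow_le_rpow (by linarith) h2 hq0.le
      have h4 : (2 * max a b) ^ q = 2 ^ q * (max a b) ^ q :=
        Real.mul_rpow (by norm_num) (le_max_of_le_left ha0)
      have h5 : (max a b) ^ q ≤ a ^ q + b ^ q := by
        rcases max_cases a b with ⟨he, _⟩ | ⟨he, _⟩ <;> rw [he]
        · exact le_add_of_nonneg_right (Real.rpow_nonneg hb0 q)
        · exact le_add_of_nonneg_left (Real.rpow_nonneg ha0 q)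
      have haq : a ^ q = L ^ q * d (n + 1) ^ (α * q) := by
        rw [Real.mul_rpow hL0 (Real.rpow_nonneg (hd0 _) _),
          ← Real.rpow_mul (hd0 _)]
      have hbq : b ^ q = L ^ q * d n ^ (α * q) := by
        rw [Real.mul_rpow hL0 (Real.rpow_nonneg (hd0 _) _),
          ← Real.rpow_mul (hd0 _)]
      calc ‖z (n + 1) - z n‖ ^ q ≤ (2 * max a b) ^ q := h1.trans h3
        _ = 2 ^ q * (max a b) ^ q := h4
        _ ≤ 2 ^ q * (a ^ q + b ^ q) :=
          mul_le_mul_of_nonneg_left h5 (Real.rpow_nonneg (by norm_num) q)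
        _ = 2 ^ q * (L ^ q * d (n + 1) ^ (α * q) + L ^ q * d n ^ (α * q)) := by
          rw [haq, hbq]
    -- summability of the majorant
    have hdαq' : Summable fun n => d (n + 1) ^ (α * q) :=
      (summable_nat_add_iff 1).mpr hdαq
    have hmaj : Summable fun n =>
        2 ^ q * (L ^ q * d (n + 1) ^ (α * q) + L ^ q * d n ^ (α * q)) :=
      (((hdαq'.mul_left (L ^ q)).add (hdαq.mul_left (L ^ q))).mul_left _)
    have hzqsum : Summable fun n => ‖z (n + 1) - z n‖ ^ q :=
      Summable.of_nonneg_of_le (fun n => Real.rpow_nonneg (norm_nonneg _) q) hzq hmaj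
    -- bound the tsum
    have hshift : ∑' n, d (n + 1) ^ (α * q) ≤ ∑' n, d n ^ (α * q) := by
      have := Summable.sum_add_tsum_nat_add 1 hdαq
      have hpos : 0 ≤ ∑ i ∈ Finset.range 1, d i ^ (α * q) := by
        refine Finset.sum_nonneg fun i _ => Real.rpow_nonneg (hd0 i) _
      linarith
    have htsum : ∑' n, ‖z (n + 1) - z n‖ ^ q ≤ 2 ^ q * (2 * (L ^ q * S ^ (α * q))) := by
      have h1 : ∑' n, ‖z (n + 1) - z n‖ ^ q ≤
          ∑' n, 2 ^ q * (L ^ q * d (n + 1) ^ (α * q) + L ^ q * d n ^ (α * q)) :=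
        Summable.tsum_le_tsum hzq hzqsum hmaj
      have h2 : ∑' n, 2 ^ q * (L ^ q * d (n + 1) ^ (α * q) + L ^ q * d n ^ (α * q)) =
          2 ^ q * (L ^ q * ∑' n, d (n + 1) ^ (α * q) + L ^ q * ∑' n, d n ^ (α * q)) := by
        rw [tsum_mul_left, Summable.tsum_add (hdαq'.mul_left _) (hdαq.mul_left _),
          tsum_mul_left, tsum_mul_left]
      have hLq0 : 0 ≤ L ^ q := Real.rpow_nonneg hL0 q
      have h3 : L ^ q * ∑' n, d (n + 1) ^ (α * q) ≤ L ^ q * S ^ (α * q) :=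
        mul_le_mul_of_nonneg_left (hshift.trans hTS) hLq0
      have h4 : L ^ q * ∑' n, d n ^ (α * q) ≤ L ^ q * S ^ (α * q) :=
        mul_le_mul_of_nonneg_left hTS hLq0
      calc ∑' n, ‖z (n + 1) - z n‖ ^ q ≤ _ := h1.trans_eq h2
        _ ≤ 2 ^ q * (2 * (L ^ q * S ^ (α * q))) := by
          have h2q : (0:ℝ) ≤ 2 ^ q := Real.rpow_nonneg (by norm_num) q
          exact mul_le_mul_of_nonneg_left (by linarith) h2q
    -- take 1/q-th root
    have hroot : (∑' n, ‖z (n + 1) - z n‖ ^ q) ^ (1 / q) ≤ 4 * (L * S ^ α) := by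
      have hnn : 0 ≤ ∑' n, ‖z (n + 1) - z n‖ ^ q :=
        tsum_nonneg fun n => Real.rpow_nonneg (norm_nonneg _) q
      have h1 : (∑' n, ‖z (n + 1) - z n‖ ^ q) ^ (1 / q) ≤
          (2 ^ q * (2 * (L ^ q * S ^ (α * q)))) ^ (1 / q) :=
        Real.rpow_le_rpow hnn htsum (by positivity)
      have hLq0 : 0 ≤ L ^ q := Real.rpow_nonneg hL0 q
      have hSαq0 : 0 ≤ S ^ (α * q) := Real.rpow_nonneg hS0 _
      have h2 : 2 ^ q * (2 * (L ^ q * S ^ (α * q))) ≤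
          2 ^ q * 2 ^ q * (L ^ q * S ^ (α * q)) := by
        have h2q : (2 : ℝ) ≤ 2 ^ q := by
          calc (2:ℝ) = 2 ^ (1:ℝ) := (Real.rpow_one 2).symm
          _ ≤ 2 ^ q := Real.rpow_le_rpow_left_iff (by norm_num) |>.mpr (by linarith)
        have hX : 0 ≤ L ^ q * S ^ (α * q) := mul_nonneg hLq0 hSαq0
        have h2q0 : (0:ℝ) ≤ 2 ^ q := by linarith
        calc 2 ^ q * (2 * (L ^ q * S ^ (α * q)))
            = 2 * (2 ^ q * (L ^ q * S ^ (α * q))) := by ring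
          _ ≤ 2 ^ q * (2 ^ q * (L ^ q * S ^ (α * q))) :=
            mul_le_mul_of_nonneg_right h2q (mul_nonneg h2q0 hX)
          _ = 2 ^ q * 2 ^ q * (L ^ q * S ^ (α * q)) := by ring
      have h2' : 2 ^ q * 2 ^ q * (L ^ q * S ^ (α * q)) = (4 * (L * S ^ α)) ^ q := by
        rw [Real.mul_rpow (by norm_num) (mul_nonneg hL0 (Real.rpow_nonneg hS0 α)),
          Real.mul_rpow hL0 (Real.rpow_nonneg hS0 α),
          ← Real.rpow_mul hS0]
        have h4q : (4 : ℝ) ^ q = 2 ^ q * 2 ^ q := by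
          rw [← Real.mul_rpow (by norm_num) (by norm_num)]; norm_num
        rw [h4q]; try ring
      have h3 : (2 ^ q * (2 * (L ^ q * S ^ (α * q)))) ^ (1 / q) ≤
          ((4 * (L * S ^ α)) ^ q) ^ (1 / q) := by
        exact Real.rpow_le_rpow (by positivity) (h2.trans_eq h2') (by positivity)
      have h4 : ((4 * (L * S ^ α)) ^ q) ^ (1 / q) = 4 * (L * S ^ α) := by
        rw [one_div, Real.rpow_rpow_inv (by positivity) hq0.ne']
      exact h1.trans (h3.trans_eq h4)
    -- assemble
    have : bvNorm q z = ‖z 0‖ + (∑' n, ‖z (n + 1) - z n‖ ^ q) ^ (1 / q) := rfl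
    rw [this]
    have hz0 : ‖z 0‖ ≤ L * S ^ α := hterm0
    calc ‖z 0‖ + (∑' n, ‖z (n + 1) - z n‖ ^ q) ^ (1 / q)
        ≤ L * S ^ α + 4 * (L * S ^ α) := add_le_add hz0 hroot
      _ = 5 * L * S ^ α := by ring
end

section
/- Let p, q ∈ [1,∞), δ > 0, L ≥ 0, and let f : E → E satisfy ‖f(u)−f(w)‖ ≤ L‖u−w‖^{p/q} for all u, w ∈ E with ‖u−w‖ ≤ δ. Suppose also C_f maps ℓ^p(E) into bv_q(E). Then C_f is uniformly continuous: for every ε > 0 there exists η > 0 such that ‖C_f(x)−C_f(y)‖_{bv_q} ≤ ε whenever x, y ∈ ℓ^p(E) with ‖x−y‖_{ℓ^p} ≤ η. -/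
private lemma aux_add_rpow (a b r : ℝ) (ha : 0 ≤ a) (hb : 0 ≤ b) (hr : 0 ≤ r) :
    (a + b) ^ r ≤ 2 ^ r * (a ^ r + b ^ r) := by
  have hmax : 0 ≤ max a b := le_max_of_le_left ha
  have h1 : a + b ≤ 2 * max a b := by
    rw [two_mul]; exact add_le_add (le_max_left _ _) (le_max_right _ _)
  calc (a + b) ^ r ≤ (2 * max a b) ^ r :=
        Real.rpow_le_rpow (by linarith) h1 hr
    _ = 2 ^ r * (max a b) ^ r := Real.mul_rpow (by norm_num) hmax
    _ ≤ 2 ^ r * (a ^ r + b ^ r) := by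
        have : (max a b) ^ r ≤ a ^ r + b ^ r := by
          rcases max_cases a b with ⟨h, _⟩ | ⟨h, _⟩ <;> rw [h]
          · linarith [Real.rpow_nonneg hb r]
          · linarith [Real.rpow_nonneg ha r]
        have h2 : (0:ℝ) ≤ 2 ^ r := Real.rpow_nonneg (by norm_num) r
        nlinarith

set_option maxHeartbeats 1000000 in
theorem stmt18 {E : Type*} [NormedAddCommGroup E]
    (p q δ L : ℝ) (hp : 1 ≤ p) (hq : 1 ≤ q) (hδ : 0 < δ) (hL : 0 ≤ L) (f : E → E)
    (hf : ∀ u w : E, ‖u - w‖ ≤ δ → ‖f u - f w‖ ≤ L * ‖u - w‖ ^ (p / q))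
    (hmaps : ∀ x : ℕ → E, (Summable fun n : ℕ => ‖x n‖ ^ p) →
      Summable fun n : ℕ => ‖f (x (n + 1)) - f (x n)‖ ^ q) :
    ∀ ε > (0 : ℝ), ∃ η > (0 : ℝ), ∀ x y : ℕ → E,
      (Summable fun n : ℕ => ‖x n‖ ^ p) → (Summable fun n : ℕ => ‖y n‖ ^ p) →
      lpNorm p (fun n => x n - y n) ≤ η →
      bvNorm q (fun n => f (x n) - f (y n)) ≤ ε := by
  intro ε hε
  have hp0 : (0:ℝ) < p := lt_of_lt_of_le one_pos hp
  have hq0 : (0:ℝ) < q := lt_of_lt_of_le one_pos hq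
  set e : ℝ := ε / (5 * (L + 1)) with he_def
  have he0 : 0 < e := by positivity
  set c : ℝ := e ^ (q / p) with hc_def
  have hc0 : 0 < c := Real.rpow_pos_of_pos he0 _
  have hcpq : c ^ (p / q) = e := by
    rw [hc_def, ← Real.rpow_mul he0.le]
    rw [show q / p * (p / q) = 1 by field_simp, Real.rpow_one]
  refine ⟨min δ c, lt_min hδ hc0, ?_⟩
  intro x y hx hy hxy
  set d : ℕ → E := fun n => x n - y n with hd_def
  set g : ℕ → E := fun n => f (x n) - f (y n) with hg_def
  -- summability of ‖d n‖ ^ p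
  have hdsum : Summable fun n => ‖d n‖ ^ p := by
    apply Summable.of_nonneg_of_le (fun n => Real.rpow_nonneg (norm_nonneg _) p)
      (fun n => ?_) (((hx.add hy).mul_left (2 ^ p)))
    calc ‖d n‖ ^ p ≤ (‖x n‖ + ‖y n‖) ^ p :=
          Real.rpow_le_rpow (norm_nonneg _) (norm_sub_le _ _) hp0.le
      _ ≤ 2 ^ p * (‖x n‖ ^ p + ‖y n‖ ^ p) :=
          aux_add_rpow _ _ _ (norm_nonneg _) (norm_nonneg _) hp0.le
  set D : ℝ := ∑' n, ‖d n‖ ^ p with hD_def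
  have hD0 : 0 ≤ D := tsum_nonneg fun n => Real.rpow_nonneg (norm_nonneg _) p
  have hlp : D ^ (1 / p) ≤ min δ c := hxy
  have hDle : D ≤ (min δ c) ^ p := by
    have := Real.rpow_le_rpow (Real.rpow_nonneg hD0 _) hlp hp0.le
    rwa [one_div, Real.rpow_inv_rpow hD0 hp0.ne'] at this
  -- each coordinate small
  have hdn : ∀ n, ‖d n‖ ≤ min δ c := by
    intro n
    have h1 : ‖d n‖ ^ p ≤ D := Summable.le_tsum hdsum n
      (fun m _ => Real.rpow_nonneg (norm_nonneg _) p)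
    calc ‖d n‖ = (‖d n‖ ^ p) ^ (1 / p) := by
          rw [one_div, Real.rpow_rpow_inv (norm_nonneg _) hp0.ne']
      _ ≤ D ^ (1 / p) := Real.rpow_le_rpow (Real.rpow_nonneg (norm_nonneg _) _) h1 (by positivity)
      _ ≤ min δ c := hlp
  -- Hölder pointwise
  have hg : ∀ n, ‖g n‖ ≤ L * ‖d n‖ ^ (p / q) :=
    fun n => hf (x n) (y n) ((hdn n).trans (min_le_left _ _))
  have hgq : ∀ n, ‖g n‖ ^ q ≤ L ^ q * ‖d n‖ ^ p := by
    intro n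
    calc ‖g n‖ ^ q ≤ (L * ‖d n‖ ^ (p / q)) ^ q :=
          Real.rpow_le_rpow (norm_nonneg _) (hg n) hq0.le
      _ = L ^ q * ‖d n‖ ^ p := by
          rw [Real.mul_rpow hL (Real.rpow_nonneg (norm_nonneg _) _),
            ← Real.rpow_mul (norm_nonneg _), div_mul_cancel₀ _ hq0.ne']
  have hA : Summable fun n => ‖g n‖ ^ q :=
    Summable.of_nonneg_of_le (fun n => Real.rpow_nonneg (norm_nonneg _) q) hgq
      (hdsum.mul_left _)
  set A : ℝ := ∑' n, ‖g n‖ ^ q with hA_def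
  have hA0 : 0 ≤ A := tsum_nonneg fun n => Real.rpow_nonneg (norm_nonneg _) q
  have hAle : A ≤ L ^ q * D := by
    calc A ≤ ∑' n, L ^ q * ‖d n‖ ^ p :=
          Summable.tsum_le_tsum hgq hA (hdsum.mul_left _)
      _ = L ^ q * D := tsum_mul_left
  have hAshift : Summable fun n => ‖g (n + 1)‖ ^ q := (summable_nat_add_iff 1).2 hA
  have hAshiftle : (∑' n, ‖g (n + 1)‖ ^ q) ≤ A := by
    have h := Summable.tsum_eq_zero_add hA
    have h0 : 0 ≤ ‖g 0‖ ^ q := Real.rpow_nonneg (norm_nonneg _) q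
    rw [hA_def]; rw [h]; linarith
  -- difference terms
  have htle : ∀ n, ‖g (n + 1) - g n‖ ^ q ≤ 2 ^ q * (‖g (n + 1)‖ ^ q + ‖g n‖ ^ q) := by
    intro n
    calc ‖g (n + 1) - g n‖ ^ q ≤ (‖g (n + 1)‖ + ‖g n‖) ^ q :=
          Real.rpow_le_rpow (norm_nonneg _) (norm_sub_le _ _) hq0.le
      _ ≤ 2 ^ q * (‖g (n + 1)‖ ^ q + ‖g n‖ ^ q) :=
          aux_add_rpow _ _ _ (norm_nonneg _) (norm_nonneg _) hq0.le
  have hTsum : Summable fun n => ‖g (n + 1) - g n‖ ^ q :=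
    Summable.of_nonneg_of_le (fun n => Real.rpow_nonneg (norm_nonneg _) q) htle
      ((hAshift.add hA).mul_left _)
  set T : ℝ := ∑' n, ‖g (n + 1) - g n‖ ^ q with hT_def
  have hT0 : 0 ≤ T := tsum_nonneg fun n => Real.rpow_nonneg (norm_nonneg _) q
  have h2q : (0:ℝ) ≤ 2 ^ q := Real.rpow_nonneg (by norm_num) q
  have hTle : T ≤ 2 ^ q * 2 * A := by
    calc T ≤ ∑' n, 2 ^ q * (‖g (n + 1)‖ ^ q + ‖g n‖ ^ q) :=
          Summable.tsum_le_tsum htle hTsum ((hAshift.add hA).mul_left _)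
      _ = 2 ^ q * ((∑' n, ‖g (n + 1)‖ ^ q) + A) := by
          rw [tsum_mul_left, Summable.tsum_add hAshift hA]
      _ ≤ 2 ^ q * (A + A) := by
          have := hAshiftle
          nlinarith
      _ = 2 ^ q * 2 * A := by ring
  -- bound D by c ^ p
  have hDc : D ≤ c ^ p :=
    hDle.trans (Real.rpow_le_rpow (le_min hδ.le hc0.le) (min_le_right _ _) hp0.le)
  -- bound on first term
  have hcp0 : 0 ≤ c ^ (p / q) := Real.rpow_nonneg hc0.le _
  have hg0 : ‖g 0‖ ≤ L * e := by
    calc ‖g 0‖ ≤ L * ‖d 0‖ ^ (p / q) := hg 0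
      _ ≤ L * c ^ (p / q) := by
          have h1 : ‖d 0‖ ^ (p / q) ≤ c ^ (p / q) :=
            Real.rpow_le_rpow (norm_nonneg _) ((hdn 0).trans (min_le_right _ _))
              (by positivity)
          nlinarith
      _ = L * e := by rw [hcpq]
  -- bound on second term
  have hTfin : T ^ (1 / q) ≤ 4 * (L * e) := by
    have hTle2 : T ≤ 2 ^ q * 2 * (L ^ q * c ^ p) := by
      have hLq : (0:ℝ) ≤ L ^ q := Real.rpow_nonneg hL q
      have h5 : A ≤ L ^ q * c ^ p := hAle.trans (mul_le_mul_of_nonneg_left hDc hLq)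
      exact hTle.trans (mul_le_mul_of_nonneg_left h5 (by positivity))
    have hstep : T ^ (1 / q) ≤ (2 ^ q * 2 * (L ^ q * c ^ p)) ^ (1 / q) :=
      Real.rpow_le_rpow hT0 hTle2 (by positivity)
    refine hstep.trans ?_
    have hcp : (0:ℝ) ≤ c ^ p := Real.rpow_nonneg hc0.le p
    have hLq : (0:ℝ) ≤ L ^ q := Real.rpow_nonneg hL q
    have hsplit : (2 ^ q * 2 * (L ^ q * c ^ p)) ^ (1 / q)
        = (2 ^ (q + 1)) ^ (1 / q) * ((L ^ q) ^ (1 / q) * (c ^ p) ^ (1 / q)) := by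
      rw [← Real.mul_rpow hLq hcp, ← Real.mul_rpow (by positivity) (by positivity)]
      congr 1
      rw [Real.rpow_add (by norm_num : (0:ℝ) < 2) q 1, Real.rpow_one]
    rw [hsplit]
    have h1 : (2 ^ (q + 1) : ℝ) ^ (1 / q) ≤ 4 := by
      rw [← Real.rpow_mul (by norm_num : (0:ℝ) ≤ 2)]
      have hexp : (q + 1) * (1 / q) ≤ 2 := by
        rw [add_mul, one_mul, ← div_eq_mul_one_div, div_self hq0.ne']
        have : 1 / q ≤ 1 := by rw [div_le_one hq0]; exact hq
        linarith
      have h24 : (2:ℝ) ^ (2:ℝ) = 4 := by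
        rw [show (2:ℝ) ^ (2:ℝ) = (2:ℝ) ^ ((2:ℕ):ℝ) by norm_num, Real.rpow_natCast]
        norm_num
      calc (2:ℝ) ^ ((q + 1) * (1 / q)) ≤ (2:ℝ) ^ (2:ℝ) :=
            Real.rpow_le_rpow_of_exponent_le (by norm_num) hexp
        _ = 4 := h24
    have h2 : (L ^ q) ^ (1 / q) = L := by
      rw [one_div, Real.rpow_rpow_inv hL hq0.ne']
    have h3 : (c ^ p) ^ (1 / q) = e := by
      rw [← Real.rpow_mul hc0.le, ← div_eq_mul_one_div, hcpq]
    rw [h2, h3]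
    have hLe0 : 0 ≤ L * e := by positivity
    have h4 : (0:ℝ) ≤ (2 ^ (q + 1) : ℝ) ^ (1 / q) := Real.rpow_nonneg (by positivity) _
    nlinarith
  -- conclude
  show ‖g 0‖ + T ^ (1 / q) ≤ ε
  have : L * e + 4 * (L * e) = 5 * L * e := by ring
  have hfin : 5 * L * e ≤ ε := by
    rw [he_def]
    rw [div_eq_mul_inv, ← mul_assoc]
    rw [mul_inv_le_iff₀ (by positivity : (0:ℝ) < 5 * (L + 1))]
    nlinarith
  linarith [hg0, hTfin]
end
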